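/- The distance between two successive winds of the square root spiral tends to π: if for each k ≥ 1 one lets N(k) be the least index j with φ(j) ≥ φ(k) + 2π, where φ(k) = Σ_{n=1}^{k} arctan(1/√n), then lim_{k→∞} ( √(N(k)) − √k ) = π. -/

import Mathlib

open Filter Finset Real Topology

lemma my_arctan_le_self {x : ℝ} (hx : 0 ≤ x) : Real.arctan x ≤ x := by
  have hd : ∀ y : ℝ, HasDerivAt (fun y : ℝ => y - Real.arctan y) (1 - 1 / (1 + y ^ 2)) y :=
    fun y => (hasDerivAt_id y).sub (Real.hasDerivAt_arctan y)
  have hm : Monotone (fun y : ℝ => y - Real.arctan y) := by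
    apply monotone_of_deriv_nonneg
    · exact fun y => ((hd y).differentiableAt : DifferentiableAt ℝ _ y)
    · intro y
      rw [(hd y).deriv]
      have h1 : (0:ℝ) < 1 + y ^ 2 := by positivity
      have : 1 / (1 + y ^ 2) ≤ 1 := by
        rw [div_le_one h1]; nlinarith
      linarith
  have := hm hx
  simp [Real.arctan_zero] at this
  linarith

lemma my_le_arctan {x : ℝ} (hx : 0 ≤ x) : x - x ^ 3 / 3 ≤ Real.arctan x := by
  have hd : ∀ y : ℝ, HasDerivAt (fun y : ℝ => Real.arctan y - y + y ^ 3 / 3)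
      (1 / (1 + y ^ 2) - 1 + (3 : ℕ) * y ^ (3 - 1) / 3) y :=
    fun y => ((Real.hasDerivAt_arctan y).sub (hasDerivAt_id y)).add
      ((hasDerivAt_pow 3 y).div_const 3)
  have hm : Monotone (fun y : ℝ => Real.arctan y - y + y ^ 3 / 3) := by
    apply monotone_of_deriv_nonneg
    · exact fun y => ((hd y).differentiableAt : DifferentiableAt ℝ _ y)
    · intro y
      rw [(hd y).deriv]
      have h1 : (0:ℝ) < 1 + y ^ 2 := by positivity
      have h2 : 1 - y ^ 2 ≤ 1 / (1 + y ^ 2) := by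
        rw [le_div_iff₀ h1]; nlinarith [sq_nonneg (y ^ 2)]
      rw [one_div] at h2
      norm_num
      linarith
  have := hm hx
  simp [Real.arctan_zero] at this
  linarith

lemma my_key (s s' : ℝ) (h1 : 1 ≤ s) (h2 : 0 ≤ s') (h3 : s' ≤ s)
    (h4 : s ^ 2 - s' ^ 2 = 1) :
    1 / s ≤ 2 * s - 2 * s' ∧ 2 * s - 2 * s' ≤ 1 / s + 1 / s ^ 3 := by
  have hs : (0:ℝ) < s := by linarith
  constructor
  · rw [div_le_iff₀ hs]
    nlinarith [sq_nonneg (s - s')]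
  · have h5 : 1 / s + 1 / s ^ 3 = (s ^ 2 + 1) / s ^ 3 := by
      field_simp
    rw [h5, le_div_iff₀ (by positivity)]
    nlinarith [mul_nonneg (mul_nonneg h2 (by linarith : (0:ℝ) ≤ 2 * s + s'))
      (sub_nonneg.2 h3), mul_pos hs (by linarith : (0:ℝ) < s + s'), sq_nonneg (s - s')]

noncomputable def myA (n : ℕ) : ℝ :=
  Real.arctan (1 / Real.sqrt n) - (2 * Real.sqrt n - 2 * Real.sqrt (n - 1 : ℕ))

lemma myA_bounds {n : ℕ} (hn : 1 ≤ n) :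
    -(4 / 3 * (1 / (n : ℝ) ^ ((3:ℝ) / 2))) ≤ myA n ∧ myA n ≤ 0 := by
  set s := Real.sqrt n with hs
  set s' := Real.sqrt ((n : ℕ) - 1 : ℕ) with hs'
  have hcast : (((n : ℕ) - 1 : ℕ) : ℝ) = (n : ℝ) - 1 := by
    have : (1:ℕ) ≤ n := hn
    push_cast [Nat.cast_sub this]; ring
  have hn1 : (1:ℝ) ≤ (n:ℝ) := by exact_mod_cast hn
  have h1 : 1 ≤ s := by
    rw [hs, show (1:ℝ) = Real.sqrt 1 by simp]
    exact Real.sqrt_le_sqrt hn1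
  have h2 : 0 ≤ s' := Real.sqrt_nonneg _
  have h3 : s' ≤ s := by
    rw [hs, hs']
    apply Real.sqrt_le_sqrt
    rw [hcast]; linarith
  have h4 : s ^ 2 - s' ^ 2 = 1 := by
    rw [hs, hs', Real.sq_sqrt (by linarith : (0:ℝ) ≤ (n:ℝ)),
      Real.sq_sqrt (by rw [hcast]; linarith : (0:ℝ) ≤ (((n : ℕ) - 1 : ℕ) : ℝ)), hcast]
    ring
  obtain ⟨k1, k2⟩ := my_key s s' h1 h2 h3 h4
  have hs0 : (0:ℝ) < s := by linarith
  have hx : (0:ℝ) ≤ 1 / s := by positivity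
  have hrpow : (n : ℝ) ^ ((3:ℝ) / 2) = s ^ 3 := by
    rw [hs, Real.sqrt_eq_rpow, ← Real.rpow_natCast ((n:ℝ) ^ ((1:ℝ)/2)) 3,
      ← Real.rpow_mul (Nat.cast_nonneg n)]
    norm_num
  have hup : Real.arctan (1 / s) ≤ 1 / s := my_arctan_le_self hx
  have hlo : 1 / s - (1 / s) ^ 3 / 3 ≤ Real.arctan (1 / s) := my_le_arctan hx
  have hcube : (1 / s) ^ 3 = 1 / s ^ 3 := by field_simp
  constructor
  · rw [myA, hrpow, ← hs, ← hs']
    rw [hcube] at hlo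
    have : 1 / s ^ 3 ≥ 0 := by positivity
    linarith
  · rw [myA, ← hs, ← hs']
    linarith

lemma myA_summable : Summable myA := by
  rw [← summable_neg_iff]
  refine Summable.of_nonneg_of_le ?_ ?_
    (((Real.summable_one_div_nat_rpow (p := (3:ℝ)/2)).mpr (by norm_num)).mul_left (4/3))
  · intro n
    rcases Nat.eq_zero_or_pos n with h | h
    · subst h; simp [myA]
    · have := (myA_bounds h).2; linarith
  · intro n
    rcases Nat.eq_zero_or_pos n with h | h
    · subst h
      have h0 : myA 0 = 0 := by simp [myA]
      rw [h0, neg_zero]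
      positivity
    · have := (myA_bounds h).1; linarith

lemma my_Icc_sum (f : ℕ → ℝ) (k : ℕ) :
    ∑ n ∈ Finset.Icc 1 k, f n = ∑ i ∈ Finset.range k, f (i + 1) := by
  induction k with
  | zero => simp
  | succ k ih =>
    rw [Finset.sum_Icc_succ_top (by omega), ih, Finset.sum_range_succ]

lemma my_sqrt_natTop : Tendsto (fun n : ℕ => Real.sqrt n) atTop atTop := by
  have := (tendsto_rpow_atTop (by norm_num : (0:ℝ) < 1/2)).comp
    (tendsto_natCast_atTop_atTop (R := ℝ))
  simpa [Real.sqrt_eq_rpow, Function.comp_def] using this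

lemma my_gap_tendsto :
    Tendsto (fun n : ℕ => Real.sqrt n - Real.sqrt (n - 1 : ℕ)) atTop (𝓝 0) := by
  have hinv : Tendsto (fun n : ℕ => (Real.sqrt n)⁻¹) atTop (𝓝 0) :=
    my_sqrt_natTop.inv_tendsto_atTop
  apply tendsto_of_tendsto_of_tendsto_of_le_of_le' tendsto_const_nhds hinv
  · filter_upwards [eventually_ge_atTop 1] with n hn
    have : ((n - 1 : ℕ) : ℝ) ≤ (n : ℝ) := by
      have := Nat.sub_le n 1; exact_mod_cast this
    have := Real.sqrt_le_sqrt this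
    linarith
  · filter_upwards [eventually_ge_atTop 1] with n hn
    set s := Real.sqrt n
    set s' := Real.sqrt ((n - 1 : ℕ) : ℝ)
    have hcast : ((n - 1 : ℕ) : ℝ) = (n : ℝ) - 1 := by
      have : (1:ℕ) ≤ n := hn
      push_cast [Nat.cast_sub this]; ring
    have hn1 : (1:ℝ) ≤ (n:ℝ) := by exact_mod_cast hn
    have h1 : 1 ≤ s := by
      rw [show (1:ℝ) = Real.sqrt 1 by simp]
      exact Real.sqrt_le_sqrt hn1
    have h2 : 0 ≤ s' := Real.sqrt_nonneg _
    have h3 : s' ≤ s := Real.sqrt_le_sqrt (by rw [hcast]; linarith)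
    have h4 : s ^ 2 - s' ^ 2 = 1 := by
      rw [Real.sq_sqrt (by linarith : (0:ℝ) ≤ (n:ℝ)),
        Real.sq_sqrt (by rw [hcast]; linarith), hcast]
      ring
    have hs0 : (0:ℝ) < s := by linarith
    rw [← one_div]
    rw [le_div_iff₀ hs0]
    nlinarith

/-- The distance between two successive winds of the square root spiral tends
to `π`: if `φ(k) = ∑_{n=1}^{k} arctan(1/√n)` and, for each `k ≥ 1`, `N k` is
the least index `j` with `φ(j) ≥ φ(k) + 2π`, then `√(N k) − √k → π`. -/
theorem dist_between_successive_winds_tendsto_pi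
    (φ : ℕ → ℝ)
    (hφ : ∀ k : ℕ, φ k = ∑ n ∈ (Finset.Icc 1 k : Finset ℕ), Real.arctan (1 / Real.sqrt n))
    (N : ℕ → ℕ)
    (hN : ∀ k : ℕ, 1 ≤ k →
      (φ (N k) ≥ φ k + 2 * Real.pi ∧
        ∀ j : ℕ, φ j ≥ φ k + 2 * Real.pi → N k ≤ j)) :
    Tendsto (fun k : ℕ => Real.sqrt (N k) - Real.sqrt k) atTop
      (nhds Real.pi) := by
  -- partial sums of `myA`
  set S : ℕ → ℝ := fun k => ∑ i ∈ Finset.range k, myA (i + 1) with hSdef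
  have hdecomp : ∀ k : ℕ, φ k = 2 * Real.sqrt k + S k := by
    intro k
    rw [hφ k, my_Icc_sum]
    have htel : ∑ i ∈ Finset.range k,
        (2 * Real.sqrt (i + 1 : ℕ) - 2 * Real.sqrt (i : ℕ)) =
        2 * Real.sqrt k - 2 * Real.sqrt (0 : ℕ) :=
      Finset.sum_range_sub (fun j => 2 * Real.sqrt (j : ℕ)) k
    have : ∀ i : ℕ, Real.arctan (1 / Real.sqrt ((i + 1 : ℕ) : ℝ)) =
        myA (i + 1) + (2 * Real.sqrt (i + 1 : ℕ) - 2 * Real.sqrt (i : ℕ)) := by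
      intro i
      simp [myA]
    calc ∑ i ∈ Finset.range k, Real.arctan (1 / Real.sqrt ((i + 1 : ℕ) : ℝ))
        = ∑ i ∈ Finset.range k,
            (myA (i + 1) + (2 * Real.sqrt (i + 1 : ℕ) - 2 * Real.sqrt (i : ℕ))) := by
          exact Finset.sum_congr rfl fun i _ => this i
      _ = S k + (2 * Real.sqrt k - 2 * Real.sqrt (0 : ℕ)) := by
          rw [Finset.sum_add_distrib, htel]
      _ = 2 * Real.sqrt k + S k := by
          rw [Nat.cast_zero, Real.sqrt_zero]; ring
  have hSum : Summable fun i : ℕ => myA (i + 1) := (summable_nat_add_iff 1).mpr myA_summable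
  set L : ℝ := ∑' i : ℕ, myA (i + 1) with hL
  have hS : Tendsto S atTop (𝓝 L) := hSum.hasSum.tendsto_sum_nat
  -- φ is monotone
  have hmono : Monotone φ := by
    intro m k hmk
    rw [hφ m, hφ k]
    apply Finset.sum_le_sum_of_subset_of_nonneg (Finset.Icc_subset_Icc_right hmk)
    intro n _ _
    rw [← Real.arctan_zero]
    exact Real.arctan_strictMono.monotone (by positivity)
  -- N k ≥ k + 1 for k ≥ 1
  have hNk : ∀ k : ℕ, 1 ≤ k → k + 1 ≤ N k := by
    intro k hk
    by_contra h
    push_neg at h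
    have h2 : N k ≤ k := by omega
    have := hmono h2
    have h3 := (hN k hk).1
    have := Real.pi_pos
    linarith
  have hNtop : Tendsto N atTop atTop := by
    apply tendsto_atTop_mono' atTop (f₁ := fun k => k + 1)
    · filter_upwards [eventually_ge_atTop 1] with k hk using hNk k hk
    · exact tendsto_add_atTop_nat 1
  have hN1top : Tendsto (fun k => N k - 1) atTop atTop := by
    apply tendsto_atTop_mono' atTop (f₁ := fun k => k)
    · filter_upwards [eventually_ge_atTop 1] with k hk
      have := hNk k hk; omega
    · exact tendsto_id
  have hSN : Tendsto (fun k => S (N k)) atTop (𝓝 L) := hS.comp hNtop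
  have hSN1 : Tendsto (fun k => S (N k - 1)) atTop (𝓝 L) := hS.comp hN1top
  have hgN : Tendsto (fun k => Real.sqrt (N k) - Real.sqrt ((N k - 1 : ℕ) : ℝ)) atTop (𝓝 0) :=
    my_gap_tendsto.comp hNtop
  -- squeeze
  have hlow : Tendsto (fun k => Real.pi + (S k - S (N k)) / 2) atTop (𝓝 Real.pi) := by
    have := tendsto_const_nhds (x := Real.pi) (f := atTop (α := ℕ)) |>.add
      (((hS.sub hSN).div_const 2))
    simpa using this
  have hup : Tendsto (fun k => Real.pi + (S k - S (N k - 1)) / 2 +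
      (Real.sqrt (N k) - Real.sqrt ((N k - 1 : ℕ) : ℝ))) atTop (𝓝 Real.pi) := by
    have := (tendsto_const_nhds (x := Real.pi) (f := atTop (α := ℕ)) |>.add
      (((hS.sub hSN1).div_const 2))).add hgN
    simpa using this
  apply tendsto_of_tendsto_of_tendsto_of_le_of_le' hlow hup
  · filter_upwards [eventually_ge_atTop 1] with k hk
    have h1 := (hN k hk).1
    rw [hdecomp (N k), hdecomp k] at h1
    linarith
  · filter_upwards [eventually_ge_atTop 1] with k hk
    have hk2 : 2 ≤ N k := by have := hNk k hk; omega
    have h2 : φ (N k - 1) < φ k + 2 * Real.pi := by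
      by_contra h
      push_neg at h
      have := (hN k hk).2 (N k - 1) h
      omega
    rw [hdecomp (N k - 1), hdecomp k] at h2
    linarith
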